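/- Let A be a commutative ring, f ∈ A[[u]] a formal power series, and 0 = J₀ ⊆ J₁ ⊆ … ⊆ J_t = A a chain of ideals of A. Let k₁, …, k_t be natural numbers and assume for each j ∈ {1, …, t} and each natural number N: whenever x ∈ A[[u]] has all its coefficients in J_j and all coefficients of f · x in degrees < N lie in J_{j−1}, then all coefficients of x in degrees < N − k_j lie in J_{j−1}. Then for every natural number M and every ν ∈ A[[u]] such that all coefficients of f · ν vanish in degrees < M, all coefficients of ν vanish in degrees < M − (k₁ + … + k_t); that is, the kernel of multiplication by f from A[[u]] to A[[u]]/(u^M) is contained in the ideal (u^{M − Σ_j k_j}). -/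

import Mathlib

/-- **Dévissage for kernel-order bounds (Proposition A.1, effective Atiyah–Bott lemma for
`BP`)**: given a finite chain of ideals `0 = J₀ ⊆ J₁ ⊆ ⋯ ⊆ J_t = A` of a commutative ring
`A` and a power series `f ∈ A[[u]]` such that multiplication by `f` on each successive
slice has kernel-order bound `k_j` (for all truncations `N`), the kernel of multiplication
by `f` from `A[[u]]` to `A[[u]]/(u^M)` is contained in `(u^{M - (k₁ + ⋯ + k_t)})`. -/
theorem devissage_kernel_order_bound {A : Type*} [CommRing A] (f : PowerSeries A)
    (t : ℕ) (J : ℕ → Ideal A) (hJ0 : J 0 = ⊥) (hJt : J t = ⊤)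
    (hchain : ∀ j : ℕ, 1 ≤ j → j ≤ t → J (j - 1) ≤ J j)
    (k : ℕ → ℕ)
    (hslice : ∀ j : ℕ, 1 ≤ j → j ≤ t → ∀ N : ℕ, ∀ x : PowerSeries A,
      (∀ i : ℕ, PowerSeries.coeff i x ∈ J j) →
      (∀ i < N, PowerSeries.coeff i (f * x) ∈ J (j - 1)) →
      ∀ i < N - k j, PowerSeries.coeff i x ∈ J (j - 1)) :
    ∀ M : ℕ, ∀ ν : PowerSeries A,
      (∀ i < M, PowerSeries.coeff i (f * ν) = 0) →
      ∀ i < M - ∑ j ∈ Finset.Icc 1 t, k j, PowerSeries.coeff i ν = 0 := by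
  intro M ν hν
  have key : ∀ d, d ≤ t → ∀ i < M - ∑ j ∈ Finset.Icc (t - d + 1) t, k j,
      PowerSeries.coeff i ν ∈ J (t - d) := by
    intro d
    induction d with
    | zero =>
      intro _ i hi
      have : Finset.Icc (t - 0 + 1) t = ∅ := by
        apply Finset.Icc_eq_empty; omega
      simp [hJt]
    | succ d ih =>
      intro hd i hi
      have hd' : d ≤ t := by omega
      set m := t - d with hm
      have hm1 : 1 ≤ m := by omega
      have hmt : m ≤ t := Nat.sub_le t d
      have htd1 : t - (d + 1) = m - 1 := by omega
      set S := ∑ j ∈ Finset.Icc (m + 1) t, k j with hS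
      set N := M - S with hN
      set x : PowerSeries A :=
        PowerSeries.mk fun i => if i < N then PowerSeries.coeff i ν else 0 with hx
      have hxJ : ∀ i, PowerSeries.coeff i x ∈ J m := by
        intro i
        simp only [hx, PowerSeries.coeff_mk]
        split
        · exact ih hd' i ‹_›
        · exact (J m).zero_mem
      have hfx : ∀ i < N, PowerSeries.coeff i (f * x) ∈ J (m - 1) := by
        intro i hiN
        have heq : PowerSeries.coeff i (f * x) = PowerSeries.coeff i (f * ν) := by
          rw [PowerSeries.coeff_mul, PowerSeries.coeff_mul]
          apply Finset.sum_congr rfl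
          intro p hp
          have hp2 : p.2 ≤ i := by
            have := Finset.HasAntidiagonal.mem_antidiagonal.mp hp
            omega
          simp only [hx, PowerSeries.coeff_mk, if_pos (lt_of_le_of_lt hp2 hiN)]
        rw [heq, hν i (lt_of_lt_of_le hiN (Nat.sub_le M _))]
        exact (J (m - 1)).zero_mem
      have hsum : ∑ j ∈ Finset.Icc (t - (d + 1) + 1) t, k j = k m + S := by
        have h1 : t - (d + 1) + 1 = m := by omega
        rw [h1, Finset.Icc_eq_cons_Ioc hmt, Finset.sum_cons, hS, Finset.Icc_add_one_left_eq_Ioc]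
      rw [hsum] at hi
      have hiN' : i < N - k m := by omega
      have hres := hslice m hm1 hmt N x hxJ hfx i hiN'
      have hix : PowerSeries.coeff i x = PowerSeries.coeff i ν := by
        simp only [hx, PowerSeries.coeff_mk, if_pos (show i < N by omega)]
      rw [htd1]
      rwa [hix] at hres
  intro i hi
  have h0 : Finset.Icc (t - t + 1) t = Finset.Icc 1 t := by
    congr 1; omega
  have := key t le_rfl i (by rw [h0]; exact hi)
  rw [Nat.sub_self, hJ0] at this
  simpa using this
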